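/- Assume covariate shift: p_tr(x,y) = p_tr(x)p(y|x), p_te(x,y) = p_te(x)p(y|x), and p_tr(x) > 0 wherever p_te(x) > 0. Let ℓ be a bounded measurable loss, let A_{n-1} be a measurable learning map from samples of size n−1 to hypotheses, and let S_n be i.i.d. from p_tr. Then the Leave-One-Out Importance-Weighted Cross Validation estimate R̂_LOOIWCV = (1/n) Σ_{j=1}^n (p_te(x_j)/p_tr(x_j)) · ℓ(A_{n-1}(S_n^j)(x_j), y_j) satisfies E_{S_n}[R̂_LOOIWCV] = R^{(n-1)}, the expected test-distribution risk of a hypothesis trained on n−1 training examples; i.e., LOOIWCV gives an unbiased estimate of R^{(n-1)} even under covariate shift. -/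

import Mathlib

open MeasureTheory ProbabilityTheory
open scoped MeasureTheory ENNReal NNReal

section aux
variable {X Y : Type*} [MeasurableSpace X] [MeasurableSpace Y]

lemma compProd_withDensity_fst
    (α : Measure X) [SFinite α] (κ : Kernel X Y) [IsSFiniteKernel κ]
    (f : X → ℝ≥0∞) (hf : Measurable f) :
    (α.withDensity f) ⊗ₘ κ = (α ⊗ₘ κ).withDensity (fun z => f z.1) := by
  have hmf : Measurable fun z : X × Y => f z.1 := hf.comp measurable_fst
  ext s hs
  rw [Measure.compProd_apply hs, withDensity_apply _ hs,
    lintegral_withDensity_eq_lintegral_mul _ hf (Kernel.measurable_kernel_prodMk_left hs),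
    ← lintegral_indicator hs,
    Measure.lintegral_compProd (f := s.indicator fun z : X × Y => f z.1) (hmf.indicator hs)]
  congr 1 with x
  have h1 : ∀ y, s.indicator (fun z : X × Y => f z.1) (x, y)
      = (Prod.mk x ⁻¹' s).indicator (fun _ => f x) y := by
    intro y; by_cases h : (x, y) ∈ s <;> simp [Set.indicator_apply, Set.mem_preimage, h]
  simp only [Pi.mul_apply]
  simp_rw [h1]
  rw [lintegral_indicator (measurable_prodMk_left hs), setLIntegral_const, mul_comm]

lemma density_change (μ : Measure X) (ptr pte : X → ℝ)
    (h0te : ∀ x, 0 ≤ pte x)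
    (hpos : ∀ᵐ x ∂μ, 0 < pte x → 0 < ptr x) :
    μ.withDensity ((fun x => ENNReal.ofReal (ptr x)) * fun x => ENNReal.ofReal (pte x / ptr x))
      = μ.withDensity (fun x => ENNReal.ofReal (pte x)) := by
  refine withDensity_congr_ae ?_
  filter_upwards [hpos] with x hx
  simp only [Pi.mul_apply]
  rcases eq_or_lt_of_le (h0te x) with h | h
  · simp [← h]
  · have hptr : 0 < ptr x := hx h
    rw [← ENNReal.ofReal_mul hptr.le, mul_div_cancel₀ _ hptr.ne']

end aux

/-- Unbiasedness of Leave-One-Out Importance-Weighted Cross Validation under covariate shift: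
with training joint distribution `p_tr(x,y) = p_tr(x) p(y|x)` and test joint distribution
`p_te(x,y) = p_te(x) p(y|x)` sharing the conditional `p(y|x)` (the Markov kernel `κ`), with
`p_tr(x) > 0` wherever `p_te(x) > 0`, for an i.i.d. training sample `S` of size `n + 1` from the
training joint distribution, the LOOIWCV estimate
`(1/(n+1)) ∑_j (p_te(x_j)/p_tr(x_j)) ℓ(A(S^j)(x_j), y_j)` has expectation
`R^{(n)} = E_{S' ∼ p_tr^n, (x,y) ∼ p_te}[ℓ(A(S')(x), y)]`, the expected test-distribution risk of
a hypothesis trained on one fewer training example. -/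
theorem looiwcv_unbiased
    {X Y : Type*} [MeasurableSpace X] [MeasurableSpace Y]
    (μ : Measure X) [SigmaFinite μ]
    (ptr pte : X → ℝ) (κ : Kernel X Y) [IsMarkovKernel κ]
    (hm1 : Measurable ptr) (hm2 : Measurable pte)
    (h0tr : ∀ x, 0 ≤ ptr x) (h0te : ∀ x, 0 ≤ pte x)
    (htr1 : ∫ x, ptr x ∂μ = 1) (hte1 : ∫ x, pte x ∂μ = 1)
    (hpos : ∀ᵐ x ∂μ, 0 < pte x → 0 < ptr x)
    (n : ℕ)
    (A : (Fin n → X × Y) → X → ℝ)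
    (hA : Measurable fun s : (Fin n → X × Y) × X => A s.1 s.2)
    (ℓ : ℝ × Y → ℝ) (hℓ : Measurable ℓ) (C : ℝ) (hC : ∀ z, |ℓ z| ≤ C) :
    ∫ S : Fin (n + 1) → X × Y,
        (1 / ((n : ℝ) + 1)) * ∑ j : Fin (n + 1),
          (pte (S j).1 / ptr (S j).1) * ℓ (A (j.removeNth S) (S j).1, (S j).2)
        ∂(Measure.pi fun _ => (μ.withDensity fun x => ENNReal.ofReal (ptr x)) ⊗ₘ κ)
      = ∫ S' : Fin n → X × Y,
          ∫ z : X × Y, ℓ (A S' z.1, z.2)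
            ∂((μ.withDensity fun x => ENNReal.ofReal (pte x)) ⊗ₘ κ)
          ∂(Measure.pi fun _ => (μ.withDensity fun x => ENNReal.ofReal (ptr x)) ⊗ₘ κ) := by
  -- probability measures
  have hprob : ∀ (p : X → ℝ), Measurable p → (∀ x, 0 ≤ p x) → (∫ x, p x ∂μ = 1) →
      IsProbabilityMeasure (μ.withDensity fun x => ENNReal.ofReal (p x)) := by
    intro p hmp h0p hp1
    have hint : Integrable p μ := by
      by_contra h
      rw [integral_undef h] at hp1; norm_num at hp1
    constructor
    rw [withDensity_apply _ MeasurableSet.univ, Measure.restrict_univ,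
      ← ofReal_integral_eq_lintegral_ofReal hint (ae_of_all _ h0p), hp1, ENNReal.ofReal_one]
  haveI h1 : IsProbabilityMeasure (μ.withDensity fun x => ENNReal.ofReal (ptr x)) :=
    hprob ptr hm1 h0tr htr1
  haveI h2 : IsProbabilityMeasure (μ.withDensity fun x => ENNReal.ofReal (pte x)) :=
    hprob pte hm2 h0te hte1
  set νtr : Measure (X × Y) := (μ.withDensity fun x => ENNReal.ofReal (ptr x)) ⊗ₘ κ with hνtr
  set νte : Measure (X × Y) := (μ.withDensity fun x => ENNReal.ofReal (pte x)) ⊗ₘ κ with hνte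
  haveI : IsProbabilityMeasure νtr := by rw [hνtr]; infer_instance
  haveI : IsProbabilityMeasure νte := by rw [hνte]; infer_instance
  set πn : Measure (Fin n → X × Y) := Measure.pi fun _ => νtr with hπn
  haveI : IsProbabilityMeasure πn := by rw [hπn]; infer_instance
  -- the weight as an ℝ≥0-valued function on X × Y
  set w : X × Y → ℝ≥0 := fun z => (pte z.1 / ptr z.1).toNNReal with hw
  have hwm : Measurable w := ((hm2.comp measurable_fst).div (hm1.comp measurable_fst)).real_toNNReal
  -- the integrand on the product space
  set G : (X × Y) × (Fin n → X × Y) → ℝ := fun p => ℓ (A p.2 p.1.1, p.1.2) with hG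
  have hGm : Measurable G :=
    hℓ.comp ((hA.comp (measurable_snd.prodMk (measurable_fst.comp measurable_fst))).prodMk
      (measurable_snd.comp measurable_fst))
  -- measure identity on the product space
  have hmeas_eq : (νtr.prod πn).withDensity (fun p => (w p.1 : ℝ≥0∞)) = νte.prod πn := by
    have e1 : νtr.withDensity (fun z => (w z : ℝ≥0∞)) = νte := by
      have hc : (fun z : X × Y => (w z : ℝ≥0∞))
          = fun z : X × Y => ENNReal.ofReal (pte z.1 / ptr z.1) := rfl
      rw [hc, hνtr, hνte,
        ← compProd_withDensity_fst _ κ (fun x => ENNReal.ofReal (pte x / ptr x))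
          (hm2.div hm1).ennreal_ofReal,
        ← withDensity_mul μ hm1.ennreal_ofReal
          (show Measurable fun x => ENNReal.ofReal (pte x / ptr x) from (hm2.div hm1).ennreal_ofReal),
        density_change μ ptr pte h0te hpos]
    rw [← Measure.compProd_const (μ := νtr) (ν := πn),
      ← compProd_withDensity_fst νtr (Kernel.const _ πn) (fun z => (w z : ℝ≥0∞))
        (measurable_coe_nnreal_ennreal.comp hwm), e1,
      Measure.compProd_const]
  -- integrability of G over νte.prod πn
  have hGint : Integrable G (νte.prod πn) := by
    refine (integrable_const C).mono' hGm.aestronglyMeasurable (ae_of_all _ fun p => ?_)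
    simpa using hC _
  -- integrability of the weighted integrand over νtr.prod πn
  have hWGint : Integrable (fun p => w p.1 • G p) (νtr.prod πn) :=
    (integrable_withDensity_iff_integrable_smul (f := fun p : (X × Y) × (Fin n → X × Y) => w p.1) (hwm.comp measurable_fst)).1
      (by rw [hmeas_eq]; exact hGint)
  have hcoe : ∀ p : (X × Y) × (Fin n → X × Y),
      (pte p.1.1 / ptr p.1.1) * G p = w p.1 • G p := by
    intro p
    rw [hw, NNReal.smul_def, Real.coe_toNNReal _ (div_nonneg (h0te _) (h0tr _))]
    rfl
  set F : (X × Y) × (Fin n → X × Y) → ℝ := fun p => (pte p.1.1 / ptr p.1.1) * G p with hF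
  have hFint : Integrable F (νtr.prod πn) :=
    hWGint.congr (ae_of_all _ fun p => (hcoe p).symm)
  -- evaluation of the weighted product integral
  have hprod : ∫ p : (X × Y) × (Fin n → X × Y),
      (pte p.1.1 / ptr p.1.1) * G p ∂(νtr.prod πn)
      = ∫ S' : Fin n → X × Y, ∫ z : X × Y, ℓ (A S' z.1, z.2) ∂νte ∂πn := by
    simp_rw [hcoe]
    rw [← integral_withDensity_eq_integral_smul (f := fun p : (X × Y) × (Fin n → X × Y) => w p.1) (hwm.comp measurable_fst) G, hmeas_eq]
    exact integral_prod_symm G hGint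
  -- per-coordinate reduction via the measure-preserving equivalence
  have hjval : ∀ j : Fin (n + 1),
      (∫ S : Fin (n + 1) → X × Y,
        (pte (S j).1 / ptr (S j).1) * ℓ (A (j.removeNth S) (S j).1, (S j).2)
        ∂(Measure.pi fun _ => νtr))
      = ∫ S' : Fin n → X × Y, ∫ z : X × Y, ℓ (A S' z.1, z.2) ∂νte ∂πn := by
    intro j
    have hmp := measurePreserving_piFinSuccAbove (fun _ : Fin (n + 1) => νtr) j
    have hcomp := hmp.integral_comp (MeasurableEquiv.measurableEmbedding _) F
    have hFe : ∀ S : Fin (n + 1) → X × Y,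
        F (MeasurableEquiv.piFinSuccAbove (fun _ => X × Y) j S)
          = (pte (S j).1 / ptr (S j).1) * ℓ (A (j.removeNth S) (S j).1, (S j).2) := fun S => rfl
    calc (∫ S : Fin (n + 1) → X × Y,
            (pte (S j).1 / ptr (S j).1) * ℓ (A (j.removeNth S) (S j).1, (S j).2)
            ∂(Measure.pi fun _ => νtr))
        = ∫ S : Fin (n + 1) → X × Y,
            F (MeasurableEquiv.piFinSuccAbove (fun _ => X × Y) j S)
            ∂(Measure.pi fun _ => νtr) := by simp_rw [hFe]
      _ = ∫ p, F p ∂(νtr.prod πn) := hcomp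
      _ = _ := hprod
  have hjint : ∀ j : Fin (n + 1),
      Integrable (fun S : Fin (n + 1) → X × Y =>
        (pte (S j).1 / ptr (S j).1) * ℓ (A (j.removeNth S) (S j).1, (S j).2))
        (Measure.pi fun _ => νtr) := by
    intro j
    have hmp := measurePreserving_piFinSuccAbove (fun _ : Fin (n + 1) => νtr) j
    exact (hmp.integrable_comp_emb (MeasurableEquiv.measurableEmbedding _)).2 hFint
  simp_rw [integral_const_mul]
  rw [integral_finset_sum Finset.univ (fun j _ => hjint j)]
  have : ∀ j : Fin (n + 1), j ∈ Finset.univ →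
      (∫ S : Fin (n + 1) → X × Y,
        (pte (S j).1 / ptr (S j).1) * ℓ (A (j.removeNth S) (S j).1, (S j).2)
        ∂(Measure.pi fun _ => νtr))
      = ∫ S' : Fin n → X × Y, ∫ z : X × Y, ℓ (A S' z.1, z.2) ∂νte ∂πn :=
    fun j _ => hjval j
  rw [Finset.sum_congr rfl this, Finset.sum_const, Finset.card_univ, Fintype.card_fin,
    nsmul_eq_mul]
  have hn : ((n : ℝ) + 1) ≠ 0 := by positivity
  push_cast
  field_simp
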